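/- If two hypersubstitutions σ_1 and σ_2 satisfy that σ_1(f_i) = σ_2(f_i) is an identity of a variety V for every operation symbol f_i, then σ_1(p) = σ_2(p) is an identity of V for every term p, and consequently the derived varieties V_{σ_1} and V_{σ_2} coincide. -/

import Mathlib

/-- A similarity type: operation symbols with arities. -/
structure Signature where
  I : Type
  arity : I → ℕ

/-- Terms of a signature over a variable type. -/
inductive Term (sig : Signature) (V : Type) : Type
  | var : V → Term sig V
  | app : (i : sig.I) → (Fin (sig.arity i) → Term sig V) → Term sig V

/-- Substitution of terms for variables. -/
def Term.bind {sig : Signature} {V W : Type} : Term sig V → (V → Term sig W) → Term sig W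
  | .var v, f => f v
  | .app i ts, f => .app i (fun k => (ts k).bind f)

/-- An algebra of a signature (with nonempty carrier). -/
structure Alg (sig : Signature) where
  carrier : Type
  interp : (i : sig.I) → (Fin (sig.arity i) → carrier) → carrier
  nonempty : Nonempty carrier

/-- Evaluation of a term in an algebra under an assignment. -/
def Alg.eval {sig : Signature} {V : Type} (A : Alg sig) (v : V → A.carrier) :
    Term sig V → A.carrier
  | .var x => v x
  | .app i ts => A.interp i (fun k => A.eval v (ts k))

/-- A hypersubstitution assigns to each operation symbol a term of the same arity. -/
abbrev Hyp (sig : Signature) := (i : sig.I) → Term sig (Fin (sig.arity i))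

/-- The extension of a hypersubstitution to all terms. -/
def hypApply {sig : Signature} {V : Type} (σ : Hyp sig) : Term sig V → Term sig V
  | .var x => .var x
  | .app i ts => (σ i).bind (fun k => hypApply σ (ts k))

/-- The derived algebra `A_σ`. -/
def derive {sig : Signature} (σ : Hyp sig) (A : Alg sig) : Alg sig :=
  ⟨A.carrier, fun i args => A.eval args (σ i), A.nonempty⟩

/-- An identity `p = q` holds in an algebra. -/
def Satisfies {sig : Signature} (A : Alg sig) (e : Term sig ℕ × Term sig ℕ) : Prop :=
  ∀ v : ℕ → A.carrier, A.eval v e.1 = A.eval v e.2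

/-- Models of a set of identities. -/
def Models {sig : Signature} (E : Set (Term sig ℕ × Term sig ℕ)) : Set (Alg sig) :=
  {A | ∀ e ∈ E, Satisfies A e}

/-- Equational theory of a class of algebras. -/
def Th {sig : Signature} (K : Set (Alg sig)) : Set (Term sig ℕ × Term sig ℕ) :=
  {e | ∀ A ∈ K, Satisfies A e}

/-- The variety generated by a class. -/
def varGen {sig : Signature} (K : Set (Alg sig)) : Set (Alg sig) := Models (Th K)

/-- A class is a variety iff it is an equational class. -/
def IsVariety {sig : Signature} (V : Set (Alg sig)) : Prop := ∃ E, V = Models E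

/-- The derived variety `V_σ`. -/
def derivedVariety {sig : Signature} (V : Set (Alg sig)) (σ : Hyp sig) : Set (Alg sig) :=
  varGen {B | ∃ A ∈ V, B = derive σ A}

/-- A class is trivial if all its algebras are one-element. -/
def TrivialVar {sig : Signature} (V : Set (Alg sig)) : Prop :=
  ∀ A ∈ V, Subsingleton A.carrier

/-- A variety is fluid if it contains no proper derived variety. -/
def Fluid {sig : Signature} (V : Set (Alg sig)) : Prop :=
  ∀ σ : Hyp sig, derivedVariety V σ ⊆ V → derivedVariety V σ = V

/-- The signature with one binary operation symbol. -/
def sig2 : Signature := ⟨Unit, fun _ => 2⟩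

/-- The binary operation of a `sig2`-algebra. -/
def bop (A : Alg sig2) (x y : A.carrier) : A.carrier := A.interp () ![x, y]

/-- The hypersubstitution sending `x·y` to the first projection `x`. -/
def proj1 : Hyp sig2 := fun _ => Term.var ⟨0, by simp [sig2]⟩

/-- The variety of bands (idempotent semigroups). -/
def Bands : Set (Alg sig2) :=
  {A | (∀ x y z, bop A (bop A x y) z = bop A x (bop A y z)) ∧ (∀ x, bop A x x = x)}

/-- The variety of left-zero semigroups. -/
def LeftZero : Set (Alg sig2) := {A | ∀ x y, bop A x y = x}

lemma eval_bind {sig : Signature} {V W : Type} (A : Alg sig) (t : Term sig V)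
    (f : V → Term sig W) (v : W → A.carrier) :
    A.eval v (t.bind f) = A.eval (fun x => A.eval v (f x)) t := by
  induction t with
  | var x => rfl
  | app i ts ih => simp only [Term.bind, Alg.eval, ih]

lemma eval_derive {sig : Signature} (σ : Hyp sig) (A : Alg sig) {V : Type}
    (v : V → A.carrier) (p : Term sig V) :
    (derive σ A).eval v p = A.eval v (hypApply σ p) := by
  induction p with
  | var x => rfl
  | app i ts ih =>
    show A.eval (fun k => (derive σ A).eval v (ts k)) (σ i) = _
    rw [hypApply, eval_bind]
    simp only [ih]

/-- If `σ₁(fᵢ) = σ₂(fᵢ)` is an identity of `V` for every operation symbol,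
then `σ₁(p) = σ₂(p)` is an identity of `V` for every term, and `V_{σ₁} = V_{σ₂}`. -/
theorem derived_eq_of_hyp_eq {sig : Signature} (V : Set (Alg sig)) (σ₁ σ₂ : Hyp sig)
    (h : ∀ i : sig.I, ∀ A ∈ V, ∀ v : Fin (sig.arity i) → A.carrier,
      A.eval v (σ₁ i) = A.eval v (σ₂ i)) :
    (∀ p : Term sig ℕ, ∀ A ∈ V, ∀ v : ℕ → A.carrier,
        A.eval v (hypApply σ₁ p) = A.eval v (hypApply σ₂ p)) ∧
      derivedVariety V σ₁ = derivedVariety V σ₂ := by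
  have part1 : ∀ (W : Type) (p : Term sig W), ∀ A ∈ V, ∀ v : W → A.carrier,
      A.eval v (hypApply σ₁ p) = A.eval v (hypApply σ₂ p) := by
    intro W p A hA v
    induction p with
    | var x => rfl
    | app i ts ih =>
      simp only [hypApply, eval_bind]
      have : (fun x => A.eval v (hypApply σ₁ (ts x)))
           = (fun x => A.eval v (hypApply σ₂ (ts x))) := funext fun x => ih x
      rw [this, h i A hA]
  refine ⟨fun p => part1 ℕ p, ?_⟩
  have key : Th {B | ∃ A ∈ V, B = derive σ₁ A} = Th {B | ∃ A ∈ V, B = derive σ₂ A} := by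
    ext e
    constructor <;> intro he B hB
    · obtain ⟨A, hA, rfl⟩ := hB
      intro v
      erw [eval_derive, eval_derive, ← part1 ℕ e.1 A hA v, ← part1 ℕ e.2 A hA v,
        ← eval_derive, ← eval_derive]
      exact he (derive σ₁ A) ⟨A, hA, rfl⟩ v
    · obtain ⟨A, hA, rfl⟩ := hB
      intro v
      erw [eval_derive, eval_derive, part1 ℕ e.1 A hA v, part1 ℕ e.2 A hA v,
        ← eval_derive, ← eval_derive]
      exact he (derive σ₂ A) ⟨A, hA, rfl⟩ v
  unfold derivedVariety varGen
  rw [key]
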